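/- Let A be a unital C*-algebra and let (q_n)_{n≥0} be self-adjoint elements of A such that for every t ∈ [0,1] the family (tⁿ·q_n)_{n≥0} is summable in norm, with sum G(t) = Σ_{n≥0} tⁿ q_n. Assume that 0 ≤ G(t) ≤ 1 for every t ∈ [0,1] and that G(s)² − 2·G(s)·G(t) + G(t)² = (s−t)²·1 for all s, t ∈ [0,1]. Then there exists a self-adjoint projection P ∈ A such that q₀ = 1 − P, q₁ = 2P − 1, and q_n = 0 for all n ≥ 2; consequently G(t) = t·P + (1−t)·(1−P) for all t ∈ [0,1], and all the elements q_n commute with one another. -/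

import Mathlib

open Filter Topology

private lemma sa_sq_zero {A : Type*} [NonUnitalNormedRing A] [StarRing A] [CStarRing A]
    {z : A} (hz : IsSelfAdjoint z) (h : z * z = 0) : z = 0 := by
  have h2 : ‖z‖ * ‖z‖ = 0 := by
    rw [← CStarRing.norm_star_mul_self (x := z), hz.star_eq, h, norm_zero]
  simpa [norm_eq_zero] using mul_self_eq_zero.mp h2

private lemma coeff_vanish {A : Type*} [NormedAddCommGroup A] [NormedSpace ℝ A]
    (r : ℕ → A) (C : ℝ)
    (hC : ∀ n, ‖r n‖ ≤ C)
    (hs : ∀ t : ℝ, t ∈ Set.Ioc (0:ℝ) (1/2) → Summable fun n : ℕ => t ^ n • r n)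
    (h : ∀ t : ℝ, t ∈ Set.Ioc (0:ℝ) (1/2) → (∑' n : ℕ, t ^ n • r n) = 0) :
    ∀ n, r n = 0 := by
  intro k
  induction k using Nat.strong_induction_on with
  | _ k IH =>
  have key : ∀ t : ℝ, t ∈ Set.Ioc (0:ℝ) (1/2) → ‖r k‖ ≤ 2 * C * t := by
    intro t ht
    obtain ⟨ht0, ht2⟩ := ht
    have ht1 : t < 1 := lt_of_le_of_lt ht2 (by norm_num)
    have hsm := hs t ⟨ht0, ht2⟩
    have hzero := h t ⟨ht0, ht2⟩
    have hshift := Summable.sum_add_tsum_nat_add (f := fun n : ℕ => t ^ n • r n) k hsm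
    have hpre : (∑ i ∈ Finset.range k, t ^ i • r i) = 0 :=
      Finset.sum_eq_zero fun i hi => by rw [IH i (Finset.mem_range.mp hi), smul_zero]
    rw [hzero, hpre, zero_add] at hshift
    have hsm2 : Summable fun n : ℕ => t ^ (n + k) • r (n + k) :=
      (summable_nat_add_iff k).mpr hsm
    have hzadd := Summable.tsum_eq_zero_add hsm2
    rw [hshift] at hzadd
    simp only [zero_add] at hzadd
    have hterm : t ^ k • r k = - ∑' n : ℕ, t ^ (n + 1 + k) • r (n + 1 + k) :=
      eq_neg_of_add_eq_zero_left hzadd.symm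
    have hnorm_le : ∀ n : ℕ, ‖t ^ (n + 1 + k) • r (n + 1 + k)‖ ≤ (C * t ^ (1 + k)) * t ^ n := by
      intro n
      rw [norm_smul, Real.norm_eq_abs, abs_of_pos (pow_pos ht0 _)]
      calc t ^ (n+1+k) * ‖r (n+1+k)‖ ≤ t ^ (n+1+k) * C :=
            mul_le_mul_of_nonneg_left (hC _) (le_of_lt (pow_pos ht0 _))
        _ = (C * t ^ (1+k)) * t ^ n := by
            rw [show n+1+k = n + (1+k) from by omega, pow_add]; ring
    have hgeo : Summable fun n : ℕ => (C * t ^ (1+k)) * t ^ n :=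
      (summable_geometric_of_lt_one (le_of_lt ht0) ht1).mul_left _
    have hns : Summable fun n : ℕ => ‖t ^ (n + 1 + k) • r (n + 1 + k)‖ :=
      Summable.of_nonneg_of_le (fun n => norm_nonneg _) hnorm_le hgeo
    have hb1 : ‖t ^ k • r k‖ ≤ ∑' n : ℕ, (C * t ^ (1+k)) * t ^ n := by
      rw [hterm, norm_neg]
      exact le_trans (norm_tsum_le_tsum_norm hns) (Summable.tsum_le_tsum hnorm_le hns hgeo)
    have hgeosum : (∑' n : ℕ, (C * t ^ (1+k)) * t ^ n) = (C * t ^ (1+k)) * (1 - t)⁻¹ := by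
      rw [tsum_mul_left, tsum_geometric_of_lt_one (le_of_lt ht0) ht1]
    have hinv : (1 - t)⁻¹ ≤ 2 := by
      have h12 : (1:ℝ)/2 ≤ 1 - t := by linarith
      calc (1-t)⁻¹ ≤ ((1:ℝ)/2)⁻¹ := inv_anti₀ (by norm_num) h12
        _ = 2 := by norm_num
    have hC0 : 0 ≤ C := le_trans (norm_nonneg _) (hC 0)
    have hb2 : t ^ k * ‖r k‖ ≤ (2*C*t) * t ^ k := by
      have hthis := hb1
      rw [hgeosum, norm_smul, Real.norm_eq_abs, abs_of_pos (pow_pos ht0 k)] at hthis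
      calc t ^ k * ‖r k‖ ≤ C * t ^ (1+k) * (1-t)⁻¹ := hthis
        _ ≤ C * t ^ (1+k) * 2 := mul_le_mul_of_nonneg_left hinv (by positivity)
        _ = (2*C*t) * t ^ k := by rw [pow_add]; ring
    have hb3 : t ^ k * ‖r k‖ ≤ t ^ k * (2*C*t) := by
      calc t ^ k * ‖r k‖ ≤ (2*C*t) * t ^ k := hb2
        _ = t ^ k * (2*C*t) := by ring
    exact le_of_mul_le_mul_left hb3 (pow_pos ht0 k)
  have hseq : Tendsto (fun n : ℕ => 2 * C * (1/2:ℝ) ^ (n+1)) atTop (𝓝 0) := by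
    have h1 := tendsto_pow_atTop_nhds_zero_of_lt_one
      (by norm_num : (0:ℝ) ≤ 1/2) (by norm_num : (1/2:ℝ) < 1)
    have h2 := h1.comp (tendsto_add_atTop_nat 1)
    have h3 := h2.const_mul (2*C)
    simpa [Function.comp] using h3
  have hle : ∀ n : ℕ, ‖r k‖ ≤ 2 * C * (1/2:ℝ) ^ (n+1) := by
    intro n
    apply key
    constructor
    · positivity
    · calc (1/2:ℝ)^(n+1) ≤ (1/2:ℝ)^1 :=
          pow_le_pow_of_le_one (by norm_num) (by norm_num) (by omega)
        _ = 1/2 := pow_one _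
  have hfin : ‖r k‖ ≤ 0 := ge_of_tendsto' hseq hle
  exact norm_le_zero_iff.mp hfin

/-- Rigidity of quantum isometric actions on `[0,1]`. -/
theorem quantum_isometry_unit_interval_rigidity
    {A : Type*} [CStarAlgebra A] [PartialOrder A] [StarOrderedRing A]
    (q : ℕ → A) (hq : ∀ n, IsSelfAdjoint (q n))
    (hsum : ∀ t ∈ Set.Icc (0 : ℝ) 1, Summable fun n : ℕ => t ^ n • q n)
    (G : ℝ → A) (hG : ∀ t ∈ Set.Icc (0 : ℝ) 1, G t = ∑' n : ℕ, t ^ n • q n)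
    (hpos : ∀ t ∈ Set.Icc (0 : ℝ) 1, (0 : A) ≤ G t ∧ G t ≤ 1)
    (heq : ∀ s ∈ Set.Icc (0 : ℝ) 1, ∀ t ∈ Set.Icc (0 : ℝ) 1,
      G s ^ 2 - 2 • (G s * G t) + G t ^ 2 = ((s - t) ^ 2) • (1 : A)) :
    ∃ P : A, IsSelfAdjoint P ∧ IsIdempotentElem P ∧
      q 0 = 1 - P ∧ q 1 = 2 • P - 1 ∧ (∀ n, 2 ≤ n → q n = 0) ∧
      (∀ t ∈ Set.Icc (0 : ℝ) 1, G t = t • P + (1 - t) • (1 - P)) ∧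
      (∀ m n, Commute (q m) (q n)) := by
  have h01 : (0:ℝ) ∈ Set.Icc (0:ℝ) 1 := by norm_num
  have h11 : (1:ℝ) ∈ Set.Icc (0:ℝ) 1 := by norm_num
  -- self-adjointness of G t
  have hGsa : ∀ t ∈ Set.Icc (0:ℝ) 1, IsSelfAdjoint (G t) := by
    intro t ht
    rw [hG t ht]
    have : star (∑' n : ℕ, t ^ n • q n) = ∑' n : ℕ, t ^ n • q n := by
      rw [tsum_star]
      exact tsum_congr fun n => by rw [star_smul, star_trivial, (hq n).star_eq]
    exact this
  -- the G's commute
  have hGcomm : ∀ s ∈ Set.Icc (0:ℝ) 1, ∀ t ∈ Set.Icc (0:ℝ) 1, G s * G t = G t * G s := by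
    intro s hs t ht
    have h1 := heq s hs t ht
    have h2 := congrArg star h1
    simp only [star_add, star_sub, star_pow, star_smul, star_mul, star_one, star_trivial,
        star_natCast, (hGsa s hs).star_eq, (hGsa t ht).star_eq] at h2
    have h3 : G s ^ 2 - 2 • (G t * G s) + G t ^ 2 = G s ^ 2 - 2 • (G s * G t) + G t ^ 2 := by
      rw [h2, h1]
    have h4 : (2:ℕ) • (G t * G s) = (2:ℕ) • (G s * G t) := by
      have h5 : G s ^ 2 + G t ^ 2 - 2 • (G t * G s) = G s ^ 2 + G t ^ 2 - 2 • (G s * G t) := by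
        rw [show ∀ x : A, G s ^ 2 + G t ^ 2 - x = G s ^ 2 - x + G t ^ 2 from fun x => by abel,
            show ∀ x : A, G s ^ 2 + G t ^ 2 - x = G s ^ 2 - x + G t ^ 2 from fun x => by abel]
        exact h3
      exact sub_right_injective h5
    have h6 : (2:ℝ) • (G t * G s) = (2:ℝ) • (G s * G t) := by
      rw [two_nsmul, two_nsmul] at h4
      rw [two_smul, two_smul]
      exact h4
    exact (smul_right_injective A (two_ne_zero) h6).symm
  -- squared difference identity
  have hsq : ∀ s ∈ Set.Icc (0:ℝ) 1, ∀ t ∈ Set.Icc (0:ℝ) 1,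
      (G s - G t) * (G s - G t) = ((s-t)^2) • (1:A) := by
    intro s hs t ht
    have h1 := heq s hs t ht
    rw [← h1]
    simp only [sq]
    rw [sub_mul, mul_sub, mul_sub, ← hGcomm s hs t ht, two_smul]
    abel
  obtain ⟨E, hE⟩ : ∃ x : A, x = G 1 - G 0 := ⟨_, rfl⟩
  have hEsa : IsSelfAdjoint E := by
    rw [hE]; exact (hGsa 1 h11).sub (hGsa 0 h01)
  have hE2 : E * E = 1 := by
    rw [hE]
    simpa using hsq 1 h11 0 h01
  -- affine property
  have haff : ∀ t ∈ Set.Icc (0:ℝ) 1, G t = G 0 + t • E := by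
    intro t ht
    obtain ⟨a, hadef⟩ : ∃ x : A, x = G t - G 0 := ⟨_, rfl⟩
    obtain ⟨b, hbdef⟩ : ∃ x : A, x = G 1 - G t := ⟨_, rfl⟩
    have ha2 : a * a = (t^2) • (1:A) := by
      rw [hadef]; simpa using hsq t ht 0 h01
    have hb2 : b * b = ((1-t)^2) • (1:A) := by
      rw [hbdef]; exact hsq 1 h11 t ht
    have hcab : a * b = b * a := by
      rw [hadef, hbdef]
      simp only [sub_mul, mul_sub]
      rw [hGcomm t ht 1 h11, hGcomm t ht t ht, hGcomm 0 h01 1 h11, hGcomm 0 h01 t ht]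
      abel
    have hsumab : a + b = E := by rw [hadef, hbdef, hE]; abel
    have hEE : (a+b)*(a+b) = 1 := by rw [hsumab]; exact hE2
    have hexp : a*a + a*b + b*a + b*b = 1 := by
      rw [← hEE, add_mul, mul_add, mul_add]; abel
    have h2ab : a*b + a*b = 1 - a*a - b*b := by
      rw [← hexp, ← hcab]; abel
    have h2ab' : (2:ℝ) • (a*b) = (2:ℝ) • ((t*(1-t)) • (1:A)) := by
      rw [two_smul]
      rw [h2ab, ha2, hb2]
      module
    have hab : a*b = (t*(1-t)) • (1:A) := smul_right_injective A two_ne_zero h2ab'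
    obtain ⟨z, hzdef⟩ : ∃ x : A, x = (1-t) • a - t • b := ⟨_, rfl⟩
    have hz2 : z * z = 0 := by
      have hzz : z * z = ((1-t)*(1-t)) • (a*a) - ((1-t)*t) • (a*b)
          - (t*(1-t)) • (b*a) + (t*t) • (b*b) := by
        rw [hzdef]
        simp only [sub_mul, mul_sub, smul_mul_assoc, mul_smul_comm, smul_smul]
        module
      rw [hzz, ha2, hb2, ← hcab, hab]
      simp only [smul_smul]
      module
    have hzsa : IsSelfAdjoint z := by
      rw [hzdef, hadef, hbdef]
      exact (IsSelfAdjoint.smul (star_trivial _) ((hGsa t ht).sub (hGsa 0 h01))).sub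
        (IsSelfAdjoint.smul (star_trivial _) ((hGsa 1 h11).sub (hGsa t ht)))
    have hz0 : z = 0 := sa_sq_zero hzsa hz2
    rw [hzdef, hadef, hbdef] at hz0
    rw [hE]
    have hgoal : G t - (G 0 + t • (G 1 - G 0)) =
        (1-t) • (G t - G 0) - t • (G 1 - G t) := by module
    exact sub_eq_zero.mp (hgoal.trans hz0)
  -- q 0 = G 0
  have hq0G : G 0 = q 0 := by
    rw [hG 0 h01, tsum_eq_single 0 ?_]
    · simp
    · intro n hn
      simp [zero_pow hn]
  -- the projection
  obtain ⟨P, hPdef⟩ : ∃ x : A, x = (2⁻¹ : ℝ) • (1 + E) := ⟨_, rfl⟩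
  have h1sa : IsSelfAdjoint (1:A) := star_one A
  have hPsa : IsSelfAdjoint P := by
    rw [hPdef]
    exact IsSelfAdjoint.smul (star_trivial _) (h1sa.add hEsa)
  have hPmul : P * P = P := by
    rw [hPdef]
    simp only [smul_mul_assoc, mul_smul_comm, smul_smul, mul_add, add_mul, mul_one, one_mul]
    rw [hE2]
    module
  have hPidem : IsIdempotentElem P := hPmul
  have h2P : (2:ℝ) • P = 1 + E := by
    rw [hPdef, smul_smul]
    norm_num
  have h1mE : (1:A) - E = (2:ℝ) • (1 - P) := by rw [hPdef]; module
  -- order facts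
  have hG1E : G 1 = G 0 + E := by rw [hE]; abel
  have hle1 : G 0 ≤ 1 - E := by
    have h := (hpos 1 h11).2
    rw [hG1E] at h
    exact le_sub_iff_add_le.mpr h
  have hle2 : (1:A) - G 0 ≤ 1 + E := by
    have h := (hpos 1 h11).1
    rw [hG1E] at h
    have h' : (0:A) ≤ (1 + E) - (1 - G 0) := by
      rw [show (1:A) + E - (1 - G 0) = G 0 + E from by abel]
      exact h
    exact sub_nonneg.mp h'
  -- commutation of G 0 with P
  have hCE : G 0 * E = E * G 0 := by
    rw [hE, mul_sub, sub_mul, hGcomm 0 h01 1 h11]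
  have hCP : G 0 * P = P * G 0 := by
    rw [hPdef, mul_smul_comm, smul_mul_assoc, mul_add, add_mul, mul_one, one_mul, hCE]
  have hstarP : star P = P := hPsa.star_eq
  -- P (G 0) P = 0
  have hPG0P : P * G 0 * P = 0 := by
    have hub : P * G 0 * P ≤ 0 := by
      have h := star_left_conjugate_le_conjugate hle1 P
      rw [hstarP] at h
      have hz : P * (1 - E) * P = 0 := by
        rw [h1mE, mul_smul_comm, smul_mul_assoc]
        have hstep : P * (1 - P) * P = 0 := by
          rw [mul_sub, mul_one, hPmul, sub_self, zero_mul]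
        rw [hstep, smul_zero]
      rwa [hz] at h
    have hlb : (0:A) ≤ P * G 0 * P := by
      have h := star_left_conjugate_nonneg (hpos 0 h01).1 P
      rwa [hstarP] at h
    exact le_antisymm hub hlb
  have hG0P : G 0 * P = 0 := by
    have h : P * G 0 * P = G 0 * P := by
      rw [← hCP, mul_assoc, hPmul]
    rw [← h, hPG0P]
  -- Q (1 - G 0) Q = 0 with Q = 1 - P
  obtain ⟨Q, hQdef⟩ : ∃ x : A, x = (1:A) - P := ⟨_, rfl⟩
  have hstarQ : star Q = Q := by rw [hQdef, star_sub, star_one, hstarP]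
  have hQmul : Q * Q = Q := by
    rw [hQdef]
    simp only [sub_mul, mul_sub, one_mul, mul_one]
    rw [hPmul]
    abel
  have hQPQ : Q * P = 0 := by
    rw [hQdef, sub_mul, one_mul, hPmul, sub_self]
  have hCQ : (1 - G 0) * Q = Q * (1 - G 0) := by
    rw [hQdef]
    simp only [mul_sub, sub_mul, one_mul, mul_one]
    rw [hCP]
    abel
  have hQ1G0Q : (1 - G 0) * Q = 0 := by
    have hub : Q * (1 - G 0) * Q ≤ 0 := by
      have h := star_left_conjugate_le_conjugate hle2 Q
      rw [hstarQ] at h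
      have hz : Q * (1 + E) * Q = 0 := by
        rw [← h2P, mul_smul_comm, smul_mul_assoc, hQPQ, zero_mul, smul_zero]
      rwa [hz] at h
    have hlb : (0:A) ≤ Q * (1 - G 0) * Q := by
      have hge : (0:A) ≤ 1 - G 0 := sub_nonneg.mpr (hpos 0 h01).2
      have h := star_left_conjugate_nonneg hge Q
      rwa [hstarQ] at h
    have h0 : Q * (1 - G 0) * Q = 0 := le_antisymm hub hlb
    calc (1 - G 0) * Q = (1 - G 0) * (Q * Q) := by rw [hQmul]
      _ = Q * (1 - G 0) * Q := by rw [← mul_assoc, ← hCQ]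
      _ = 0 := h0
  have hG0Q : G 0 * Q = Q := by
    have h := hQ1G0Q
    rw [sub_mul, one_mul, sub_eq_zero] at h
    exact h.symm
  have hG0eq : G 0 = 1 - P := by
    have h : G 0 = G 0 * P + G 0 * Q := by
      rw [← mul_add, hQdef, show P + ((1:A) - P) = 1 from by abel, mul_one]
    rw [h, hG0P, hG0Q, zero_add, hQdef]
  -- coefficient extraction
  have hqsummable : Summable q := by
    have h := hsum 1 h11
    simpa using h
  have htend : Tendsto (fun n => ‖q n‖) atTop (𝓝 0) := by
    simpa using hqsummable.tendsto_atTop_zero.norm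
  obtain ⟨C, hCub⟩ := htend.bddAbove_range
  have hCq : ∀ n, ‖q n‖ ≤ C := fun n => hCub (Set.mem_range_self n)
  have hC0 : (0:ℝ) ≤ C := le_trans (norm_nonneg _) (hCq 0)
  obtain ⟨r, hrdef⟩ : ∃ x : ℕ → A,
      x = fun n => if n = 0 then 0 else if n = 1 then q 1 - E else q n := ⟨_, rfl⟩
  obtain ⟨c, hcdef⟩ : ∃ x : ℕ → A,
      x = fun n => if n = 0 then q 0 else if n = 1 then E else 0 := ⟨_, rfl⟩
  have hrc : ∀ n, r n = q n - c n := by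
    intro n
    rcases n with _ | _ | n <;> simp [hrdef, hcdef, hq0G]
  have hrbound : ∀ n, ‖r n‖ ≤ C + ‖E‖ := by
    intro n
    rcases n with _ | _ | n
    · simp only [hrdef]
      norm_num
      linarith [norm_nonneg E]
    · simp only [hrdef]
      norm_num
      exact le_trans (norm_sub_le _ _) (add_le_add_left (hCq 1) _)
    · simp only [hrdef]
      norm_num
      exact le_trans (hCq _) (le_add_of_nonneg_right (norm_nonneg _))
  have hcsummable : ∀ t : ℝ, Summable fun n : ℕ => t ^ n • c n := by
    intro t
    apply summable_of_ne_finset_zero (s := ({0, 1} : Finset ℕ))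
    intro b hb
    simp only [Finset.mem_insert, Finset.mem_singleton, not_or] at hb
    simp [hcdef, hb.1, hb.2]
  have hrzero : ∀ n, r n = 0 := by
    apply coeff_vanish r (C + ‖E‖) hrbound
    · intro t ht
      have htIcc : t ∈ Set.Icc (0:ℝ) 1 := ⟨le_of_lt ht.1, le_trans ht.2 (by norm_num)⟩
      exact ((hsum t htIcc).sub (hcsummable t)).congr fun n => by rw [hrc n, smul_sub]
    · intro t ht
      have htIcc : t ∈ Set.Icc (0:ℝ) 1 := ⟨le_of_lt ht.1, le_trans ht.2 (by norm_num)⟩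
      have hc0 : ∀ b ∉ ({0, 1} : Finset ℕ), t ^ b • c b = 0 := by
        intro b hb
        simp only [Finset.mem_insert, Finset.mem_singleton, not_or] at hb
        simp [hcdef, hb.1, hb.2]
      have hctsum : (∑' n : ℕ, t ^ n • c n) = q 0 + t • E := by
        rw [tsum_eq_sum hc0, Finset.sum_pair (by norm_num : (0:ℕ) ≠ 1)]
        simp [hcdef]
      have heqsum : (∑' n : ℕ, t ^ n • r n)
          = (∑' n : ℕ, t ^ n • q n) - ∑' n : ℕ, t ^ n • c n := by
        rw [← Summable.tsum_sub (hsum t htIcc) (hcsummable t)]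
        exact tsum_congr fun n => by rw [hrc n, smul_sub]
      rw [heqsum, hctsum, ← hG t htIcc, haff t htIcc, hq0G]
      abel
  have hq1E : q 1 = E := by
    have h := hrzero 1
    simp only [hrdef] at h
    norm_num at h
    rwa [sub_eq_zero] at h
  have hqn : ∀ n, 2 ≤ n → q n = 0 := by
    intro n hn
    have h := hrzero n
    simp only [hrdef] at h
    rwa [if_neg (by omega), if_neg (by omega)] at h
  have hq0eq : q 0 = 1 - P := by rw [← hq0G]; exact hG0eq
  have hq1eq : q 1 = 2 • P - 1 := by
    rw [hq1E, two_smul]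
    have h := h2P
    rw [two_smul] at h
    rw [h]
    abel
  refine ⟨P, hPsa, hPidem, hq0eq, hq1eq, hqn, ?_, ?_⟩
  · intro t ht
    rw [haff t ht, hG0eq]
    have hEP : E = (2:ℝ) • P - 1 := by rw [h2P]; abel
    rw [hEP]
    module
  · have hcommP : ∀ n, Commute P (q n) := by
      intro n
      rcases n with _ | _ | n
      · rw [hq0eq]
        exact (Commute.one_right P).sub_right (Commute.refl P)
      · rw [hq1eq]
        exact ((Commute.refl P).smul_right 2).sub_right (Commute.one_right P)
      · rw [hqn (n+2) (by omega)]
        exact Commute.zero_right P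
    intro m n
    rcases n with _ | _ | n
    · rw [hq0eq]
      exact (Commute.one_right (q m)).sub_right (hcommP m).symm
    · rw [hq1eq]
      exact ((hcommP m).symm.smul_right 2).sub_right (Commute.one_right (q m))
    · rw [hqn (n+2) (by omega)]
      exact Commute.zero_right (q m)
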